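/- Let a1, a2, a3 ∈ SU(2) satisfy a1·a2·a3 = I, with eigenvalues of a_j equal to -e^{±iC_j}. Then equality cos²C₁ + cos²C₂ + cos²C₃ + 2·cosC₁·cosC₂·cosC₃ = 1 holds if and only if a1, a2, a3 are simultaneously diagonalizable (equivalently, pairwise commute). -/
import Mathlib
open Complex Matrix
namespace SU2Aux
abbrev M2 := Matrix (Fin 2) (Fin 2) ℂ

lemma cayley (A : M2) (h : A.det = 1) : A * A = A.trace • A - 1 := by
  rw [Matrix.det_fin_two] at h
  rw [← Matrix.ext_iff]
  simp only [Fin.forall_fin_two, Matrix.mul_apply, Fin.sum_univ_two, Matrix.sub_apply,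
    Matrix.smul_apply, Matrix.one_apply, Matrix.trace_fin_two, smul_eq_mul]
  norm_num
  refine ⟨⟨?_, ?_⟩, ?_, ?_⟩ <;> (first | ring1 | linear_combination h | linear_combination -h)

lemma inv_eq_trace_smul (A : M2) (h : A.det = 1) : A⁻¹ = A.trace • 1 - A := by
  apply Matrix.inv_eq_right_inv
  rw [Matrix.mul_sub, mul_smul_comm, mul_one, cayley A h]
  abel

lemma trace_commutator (A B : M2) (hA : A.det = 1) (hB : B.det = 1) :
    (A * B * A⁻¹ * B⁻¹).trace =
      A.trace ^ 2 + B.trace ^ 2 + (A * B).trace ^ 2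
        - A.trace * B.trace * (A * B).trace - 2 := by
  have hAB : (A * B).det = 1 := by rw [Matrix.det_mul, hA, hB, one_mul]
  have h1 : A * B * A⁻¹ * B⁻¹
      = (A.trace * B.trace) • (A * B) - A.trace • (A * (B * B))
        - B.trace • (A * B * A) + A * B * (A * B) := by
    rw [inv_eq_trace_smul A hA, inv_eq_trace_smul B hB]
    simp only [Matrix.mul_sub, Matrix.sub_mul, mul_smul_comm, smul_mul_assoc, mul_one,
      smul_smul, Matrix.smul_mul, one_mul, mul_assoc]
    module
  have h2 : (A * (B * B)).trace = B.trace * (A * B).trace - A.trace := by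
    rw [cayley B hB, Matrix.mul_sub, mul_smul_comm, Matrix.mul_one, Matrix.trace_sub,
      Matrix.trace_smul]
    simp [smul_eq_mul]
  have h3 : (A * B * A).trace = A.trace * (A * B).trace - B.trace := by
    rw [Matrix.trace_mul_comm, ← mul_assoc, cayley A hA, Matrix.sub_mul, Matrix.smul_mul,
      Matrix.one_mul, Matrix.trace_sub, Matrix.trace_smul]
    simp [smul_eq_mul, Matrix.trace_mul_comm A B]
  have h4 : (A * B * (A * B)).trace = (A * B).trace ^ 2 - 2 := by
    rw [cayley (A * B) hAB, Matrix.trace_sub, Matrix.trace_smul]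
    simp [smul_eq_mul, Matrix.trace_one]
    ring
  rw [h1]
  simp only [Matrix.trace_sub, Matrix.trace_add, Matrix.trace_smul, smul_eq_mul, h2, h3, h4]
  ring

lemma star_eq_adjugate (M : M2) (hu : M ∈ Matrix.unitaryGroup (Fin 2) ℂ) (hd : M.det = 1) :
    star M = M.adjugate := by
  have h1 : M * star M = 1 := (Matrix.mem_unitaryGroup_iff).mp hu
  have h2 : M * M.adjugate = 1 := by rw [Matrix.mul_adjugate, hd, one_smul]
  rw [← Matrix.inv_eq_right_inv h1, ← Matrix.inv_eq_right_inv h2]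

lemma su2_entries (M : M2) (hu : M ∈ Matrix.unitaryGroup (Fin 2) ℂ) (hd : M.det = 1) :
    M 1 1 = (starRingEnd ℂ) (M 0 0) ∧ M 1 0 = -(starRingEnd ℂ) (M 0 1) ∧
      M 0 0 * (starRingEnd ℂ) (M 0 0) + M 0 1 * (starRingEnd ℂ) (M 0 1) = 1 := by
  have hs := star_eq_adjugate M hu hd
  rw [Matrix.adjugate_fin_two] at hs
  have e1 := congrFun (congrFun hs 0) 0
  have e2 := congrFun (congrFun hs 1) 0
  simp [Matrix.star_apply] at e1 e2
  rw [Matrix.det_fin_two] at hd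
  refine ⟨e1.symm, ?_, ?_⟩
  · rw [e2, neg_neg]
  · rw [e1, e2]
    linear_combination hd

lemma su2_of_trace_two (M : M2) (hu : M ∈ Matrix.unitaryGroup (Fin 2) ℂ) (hd : M.det = 1)
    (ht : M.trace = 2) : M = 1 := by
  obtain ⟨e1, e2, e3⟩ := su2_entries M hu hd
  rw [Matrix.trace_fin_two, e1, Complex.add_conj] at ht
  have hre : (M 0 0).re = 1 := by
    have := congrArg Complex.re ht
    simpa using this
  have e3' : Complex.normSq (M 0 0) + Complex.normSq (M 0 1) = 1 := by
    have : ((Complex.normSq (M 0 0) + Complex.normSq (M 0 1) : ℝ) : ℂ) = 1 := by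
      push_cast
      rw [← Complex.mul_conj, ← Complex.mul_conj]
      exact e3
    exact_mod_cast this
  have hnsq : Complex.normSq (M 0 0) = 1 + (M 0 0).im ^ 2 := by
    rw [Complex.normSq_apply, hre]; ring
  have him : (M 0 0).im = 0 ∧ Complex.normSq (M 0 1) = 0 := by
    constructor <;> nlinarith [Complex.normSq_nonneg (M 0 1), sq_nonneg (M 0 0).im]
  have ha : M 0 0 = 1 := by
    apply Complex.ext <;> simp [hre, him.1]
  have hb : M 0 1 = 0 := by
    exact Complex.normSq_eq_zero.mp him.2
  rw [← Matrix.ext_iff]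
  simp only [Fin.forall_fin_two]
  refine ⟨⟨?_, ?_⟩, ?_, ?_⟩ <;> simp [ha, hb, e1, e2, Matrix.one_apply]

lemma trace_of_spectrum (M : M2) (hd : M.det = 1) (C : ℝ)
    (hs : spectrum ℂ M = {-Complex.exp (Complex.I * C), -Complex.exp (-(Complex.I * C))}) :
    M.trace = -2 * (Real.cos C : ℂ) := by
  set l := -Complex.exp (Complex.I * C) with hl
  set m := -Complex.exp (-(Complex.I * C)) with hm
  have hmem : l ∈ spectrum ℂ M := by rw [hs]; exact Set.mem_insert _ _
  rw [spectrum.mem_iff] at hmem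
  rw [Matrix.isUnit_iff_isUnit_det, isUnit_iff_ne_zero, not_not] at hmem
  have hexp : det (algebraMap ℂ M2 l - M)
      = (l - M 0 0) * (l - M 1 1) - (0 - M 0 1) * (0 - M 1 0) := by
    rw [Matrix.det_fin_two]
    simp [Matrix.algebraMap_eq_diagonal, Matrix.diagonal_apply, Matrix.sub_apply]
  rw [hexp] at hmem
  rw [Matrix.det_fin_two] at hd
  have hlm : l * m = 1 := by
    rw [hl, hm, neg_mul_neg, ← Complex.exp_add]
    simp
  have hl0 : l ≠ 0 := neg_ne_zero.mpr (Complex.exp_ne_zero _)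
  have ht : M.trace = l + m := by
    have h5 : l * M.trace = l * (l + m) := by
      rw [Matrix.trace_fin_two]
      linear_combination -hmem + hd - hlm
    exact mul_left_cancel₀ hl0 h5
  rw [ht, hl, hm]
  have hcos : Complex.exp (Complex.I * C) + Complex.exp (-(Complex.I * C))
      = 2 * Complex.cos C := by
    rw [Complex.cos]
    ring_nf
  rw [Complex.ofReal_cos]
  linear_combination -hcos

lemma isDiag_of_entries (B : M2) (h01 : B 0 1 = 0) (h10 : B 1 0 = 0) : B.IsDiag := by
  intro i j hij
  fin_cases i <;> fin_cases j <;> simp_all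

lemma isDiag_of_commute_diag (D B : M2) (hD : D.IsDiag) (hne : D 0 0 ≠ D 1 1)
    (hcomm : D * B = B * D) : B.IsDiag := by
  have hD01 : D 0 1 = 0 := hD (by decide)
  have hD10 : D 1 0 = 0 := hD (by decide)
  have h01 := congrFun (congrFun hcomm 0) 1
  have h10 := congrFun (congrFun hcomm 1) 0
  simp [Matrix.mul_apply, Fin.sum_univ_two, hD01, hD10] at h01 h10
  have hsub : D 0 0 - D 1 1 ≠ 0 := sub_ne_zero.mpr hne
  apply isDiag_of_entries
  · have : (D 0 0 - D 1 1) * B 0 1 = 0 := by linear_combination h01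
    rcases mul_eq_zero.mp this with h | h
    · exact absurd h hsub
    · exact h
  · have : (D 0 0 - D 1 1) * B 1 0 = 0 := by linear_combination -h10
    rcases mul_eq_zero.mp this with h | h
    · exact absurd h hsub
    · exact h

lemma diagonalize_su2 (M : M2) (e1 : M 1 1 = (starRingEnd ℂ) (M 0 0))
    (e2 : M 1 0 = -(starRingEnd ℂ) (M 0 1))
    (e3 : M 0 0 * (starRingEnd ℂ) (M 0 0) + M 0 1 * (starRingEnd ℂ) (M 0 1) = 1)
    (hb : M 0 1 ≠ 0) :
    ∃ (P : M2) (lp lm : ℂ), IsUnit P.det ∧ lp ≠ lm ∧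
      M * P = P * Matrix.diagonal ![lp, lm] := by
  set a := M 0 0 with ha
  set b := M 0 1 with hbb
  set r : ℝ := a.re with hr
  have hnsq : Complex.normSq a + Complex.normSq b = 1 := by
    have : ((Complex.normSq a + Complex.normSq b : ℝ) : ℂ) = 1 := by
      push_cast
      rw [← Complex.mul_conj, ← Complex.mul_conj]
      exact e3
    exact_mod_cast this
  have hbpos : 0 < Complex.normSq b := by
    rcases lt_or_eq_of_le (Complex.normSq_nonneg b) with h | h
    · exact h
    · exact absurd (Complex.normSq_eq_zero.mp h.symm) hb
  have hr2 : r ^ 2 < 1 := by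
    have : r ^ 2 ≤ Complex.normSq a := by
      rw [Complex.normSq_apply, hr]; nlinarith [sq_nonneg a.im]
    nlinarith
  set s : ℝ := Real.sqrt (1 - r ^ 2) with hsdef
  have hs2 : s ^ 2 = 1 - r ^ 2 := Real.sq_sqrt (by nlinarith)
  have hspos : 0 < s := Real.sqrt_pos.mpr (by nlinarith)
  set lp : ℂ := (r : ℂ) + s * Complex.I with hlp
  set lm : ℂ := (r : ℂ) - s * Complex.I with hlm
  have hne : lp ≠ lm := by
    intro h
    have him := congrArg Complex.im h
    simp [hlp, hlm] at him
    linarith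
  have hsum : lp + lm = a + (starRingEnd ℂ) a := by
    rw [hlp, hlm, Complex.add_conj, hr]; push_cast; ring
  have hprod : lp * lm = 1 := by
    rw [hlp, hlm]
    have : ((r : ℂ) + s * I) * ((r : ℂ) - s * I) = (r : ℂ)^2 + (s : ℂ)^2 := by
      have := Complex.I_sq
      linear_combination (-(s:ℂ)^2) * this
    rw [this]
    have : ((r^2 + s^2 : ℝ) : ℂ) = ((1:ℝ) : ℂ) := by
      norm_cast
      nlinarith
    push_cast at this
    linear_combination this
  refine ⟨!![b, b; lp - a, lm - a], lp, lm, ?_, hne, ?_⟩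
  · rw [Matrix.det_fin_two_of, isUnit_iff_ne_zero]
    intro h
    have : b * (lm - lp) = 0 := by linear_combination h
    rcases mul_eq_zero.mp this with h' | h'
    · exact hb h'
    · exact hne (by linear_combination -h')
  · have hquadp : lp * lp - (a + (starRingEnd ℂ) a) * lp + 1 = 0 := by
      rw [← hsum, ← hprod]; ring
    have hquadm : lm * lm - (a + (starRingEnd ℂ) a) * lm + 1 = 0 := by
      rw [← hsum, ← hprod]; ring
    rw [← Matrix.ext_iff]
    simp only [Fin.forall_fin_two, Matrix.mul_apply, Fin.sum_univ_two,
      Matrix.cons_val', Matrix.cons_val_zero, Matrix.cons_val_one, Matrix.head_cons,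
      Matrix.head_fin_const, Matrix.empty_val', Matrix.cons_val_fin_one,
      Matrix.diagonal_apply, Matrix.of_apply]
    norm_num
    refine ⟨⟨?_, ?_⟩, ?_, ?_⟩ <;>
      first
        | ring1
        | (rw [e1, e2]; linear_combination e3 + hquadp)
        | (rw [e1, e2]; linear_combination e3 + hquadm)
        | (rw [e1, e2]; linear_combination -e3 - hquadp)
        | (rw [e1, e2]; linear_combination -e3 - hquadm)
lemma isDiag_mul (X Y : M2) (hX : X.IsDiag) (hY : Y.IsDiag) : (X * Y).IsDiag := by
  rw [← hX.diagonal_diag, ← hY.diagonal_diag, Matrix.diagonal_mul_diagonal]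
  exact Matrix.isDiag_diagonal _

lemma isDiag_comm (X Y : M2) (hX : X.IsDiag) (hY : Y.IsDiag) : X * Y = Y * X := by
  have hX01 : X 0 1 = 0 := hX (by decide)
  have hX10 : X 1 0 = 0 := hX (by decide)
  have hY01 : Y 0 1 = 0 := hY (by decide)
  have hY10 : Y 1 0 = 0 := hY (by decide)
  rw [← Matrix.ext_iff]
  simp only [Fin.forall_fin_two, Matrix.mul_apply, Fin.sum_univ_two, hX01, hX10, hY01, hY10]
  norm_num [mul_comm]

lemma isDiag_of_mul_eq_one (X Y : M2) (hX : X.IsDiag) (h : X * Y = 1) : Y.IsDiag := by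
  have h00 := congrFun (congrFun h 0) 0
  have h01 := congrFun (congrFun h 0) 1
  have h11 := congrFun (congrFun h 1) 1
  have h10 := congrFun (congrFun h 1) 0
  have hX01 : X 0 1 = 0 := hX (by decide)
  have hX10 : X 1 0 = 0 := hX (by decide)
  simp [Matrix.mul_apply, Fin.sum_univ_two, hX01, hX10, Matrix.one_apply] at h00 h01 h10 h11
  intro i j hij
  fin_cases i <;> fin_cases j <;> simp_all
  · rcases h01 with h | h
    · rw [h, zero_mul] at h00; exact absurd h00 (by norm_num)
    · exact h
  · rcases h10 with h | h
    · rw [h, zero_mul] at h11; exact absurd h11 (by norm_num)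
    · exact h

lemma conj_eq (u : (M2)ˣ) (M D : M2) (h : M * ↑u = ↑u * D) :
    (↑(u⁻¹) : M2) * M * ↑u = D := by
  rw [mul_assoc, h, ← mul_assoc, Units.inv_mul, one_mul]

lemma conj_mul (u : (M2)ˣ) (X Y : M2) :
    ((↑(u⁻¹) : M2) * X * ↑u) * ((↑(u⁻¹) : M2) * Y * ↑u)
      = (↑(u⁻¹) : M2) * (X * Y) * ↑u := by
  have := u.mul_inv
  calc ((↑(u⁻¹) : M2) * X * ↑u) * ((↑(u⁻¹) : M2) * Y * ↑u)
      = (↑(u⁻¹) : M2) * X * ((↑u : M2) * ↑(u⁻¹)) * Y * ↑u := by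
        simp only [mul_assoc]
    _ = (↑(u⁻¹) : M2) * (X * Y) * ↑u := by rw [u.mul_inv]; simp only [mul_one, mul_assoc]

lemma exists_simul_diag (A B : M2)
    (eA1 : A 1 1 = (starRingEnd ℂ) (A 0 0)) (eA2 : A 1 0 = -(starRingEnd ℂ) (A 0 1))
    (eA3 : A 0 0 * (starRingEnd ℂ) (A 0 0) + A 0 1 * (starRingEnd ℂ) (A 0 1) = 1)
    (eB1 : B 1 1 = (starRingEnd ℂ) (B 0 0)) (eB2 : B 1 0 = -(starRingEnd ℂ) (B 0 1))
    (eB3 : B 0 0 * (starRingEnd ℂ) (B 0 0) + B 0 1 * (starRingEnd ℂ) (B 0 1) = 1)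
    (hcomm : A * B = B * A) :
    ∃ u : (M2)ˣ, ((↑(u⁻¹) : M2) * A * ↑u).IsDiag ∧ ((↑(u⁻¹) : M2) * B * ↑u).IsDiag := by
  by_cases hA01 : A 0 1 = 0
  · have hA10 : A 1 0 = 0 := by rw [eA2, hA01]; simp
    by_cases hAsc : A 0 0 = A 1 1
    · -- A is scalar
      have hAeq : A = A 0 0 • 1 := by
        rw [← Matrix.ext_iff]
        simp only [Fin.forall_fin_two, Matrix.smul_apply, Matrix.one_apply, smul_eq_mul]
        norm_num [hA01, hA10, hAsc.symm]
      by_cases hB01 : B 0 1 = 0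
      · refine ⟨1, ?_, ?_⟩ <;> simp only [inv_one, Units.val_one, one_mul, mul_one]
        · exact isDiag_of_entries A hA01 hA10
        · exact isDiag_of_entries B hB01 (by rw [eB2, hB01]; simp)
      · obtain ⟨P, lp, lm, hdetP, hne, hMP⟩ := diagonalize_su2 B eB1 eB2 eB3 hB01
        have hP : IsUnit P := (Matrix.isUnit_iff_isUnit_det P).mpr hdetP
        refine ⟨hP.unit, ?_, ?_⟩
        · rw [hAeq]
          have : (↑(hP.unit⁻¹) : M2) * (A 0 0 • 1) * ↑hP.unit = A 0 0 • 1 := by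
            rw [Matrix.mul_smul, mul_one, Matrix.smul_mul, Units.inv_mul]
          rw [this]
          exact (Matrix.isDiag_one (n := Fin 2)).smul _
        · have := conj_eq hP.unit B (Matrix.diagonal ![lp, lm]) (by rw [hP.unit_spec]; exact hMP)
          rw [this]
          exact Matrix.isDiag_diagonal _
    · -- A diagonal with distinct entries, B commutes with A
      refine ⟨1, ?_, ?_⟩ <;> simp only [inv_one, Units.val_one, one_mul, mul_one]
      · exact isDiag_of_entries A hA01 hA10
      · exact isDiag_of_commute_diag A B (isDiag_of_entries A hA01 hA10) hAsc hcomm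
  · obtain ⟨P, lp, lm, hdetP, hne, hMP⟩ := diagonalize_su2 A eA1 eA2 eA3 hA01
    have hP : IsUnit P := (Matrix.isUnit_iff_isUnit_det P).mpr hdetP
    set u := hP.unit with hu
    have hDA : (↑(u⁻¹) : M2) * A * ↑u = Matrix.diagonal ![lp, lm] :=
      conj_eq u A _ (by rw [hP.unit_spec]; exact hMP)
    refine ⟨u, ?_, ?_⟩
    · rw [hDA]; exact Matrix.isDiag_diagonal _
    · have hcomm' : ((↑(u⁻¹) : M2) * A * ↑u) * ((↑(u⁻¹) : M2) * B * ↑u)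
          = ((↑(u⁻¹) : M2) * B * ↑u) * ((↑(u⁻¹) : M2) * A * ↑u) := by
        rw [conj_mul, conj_mul, hcomm]
      rw [hDA] at hcomm'
      refine isDiag_of_commute_diag _ _ (Matrix.isDiag_diagonal _) ?_ hcomm'
      simpa using hne
lemma conj_inj (u : (M2)ˣ) (X Y : M2)
    (h : (↑(u⁻¹) : M2) * X * ↑u = (↑(u⁻¹) : M2) * Y * ↑u) : X = Y := by
  have key : ∀ Z : M2, (↑u : M2) * ((↑(u⁻¹) : M2) * Z * ↑u) * ↑(u⁻¹) = Z := by
    intro Z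
    calc (↑u : M2) * ((↑(u⁻¹) : M2) * Z * ↑u) * ↑(u⁻¹)
        = ((↑u : M2) * ↑(u⁻¹)) * Z * ((↑u : M2) * ↑(u⁻¹)) := by
          simp only [mul_assoc]
      _ = Z := by rw [u.mul_inv]; simp
  calc X = (↑u : M2) * ((↑(u⁻¹) : M2) * X * ↑u) * ↑(u⁻¹) := (key X).symm
    _ = (↑u : M2) * ((↑(u⁻¹) : M2) * Y * ↑u) * ↑(u⁻¹) := by rw [h]
    _ = Y := key Y

end SU2Aux

open SU2Aux in
theorem su2_trace_equality_iff_simultaneously_diagonalizable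
    (a₁ a₂ a₃ : Matrix.specialUnitaryGroup (Fin 2) ℂ) (C₁ C₂ C₃ : ℝ)
    (hprod : a₁ * a₂ * a₃ = 1)
    (h₁ : spectrum ℂ (a₁ : Matrix (Fin 2) (Fin 2) ℂ) =
      {-Complex.exp (Complex.I * C₁), -Complex.exp (-(Complex.I * C₁))})
    (h₂ : spectrum ℂ (a₂ : Matrix (Fin 2) (Fin 2) ℂ) =
      {-Complex.exp (Complex.I * C₂), -Complex.exp (-(Complex.I * C₂))})
    (h₃ : spectrum ℂ (a₃ : Matrix (Fin 2) (Fin 2) ℂ) =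
      {-Complex.exp (Complex.I * C₃), -Complex.exp (-(Complex.I * C₃))}) :
    (Real.cos C₁ ^ 2 + Real.cos C₂ ^ 2 + Real.cos C₃ ^ 2 +
        2 * Real.cos C₁ * Real.cos C₂ * Real.cos C₃ = 1) ↔
      (∃ P : GL (Fin 2) ℂ,
        ((P⁻¹ : GL (Fin 2) ℂ) * (a₁ : Matrix (Fin 2) (Fin 2) ℂ) * P : Matrix (Fin 2) (Fin 2) ℂ).IsDiag ∧
        ((P⁻¹ : GL (Fin 2) ℂ) * (a₂ : Matrix (Fin 2) (Fin 2) ℂ) * P : Matrix (Fin 2) (Fin 2) ℂ).IsDiag ∧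
        ((P⁻¹ : GL (Fin 2) ℂ) * (a₃ : Matrix (Fin 2) (Fin 2) ℂ) * P : Matrix (Fin 2) (Fin 2) ℂ).IsDiag) := by
  obtain ⟨hu1, hd1⟩ := Matrix.mem_specialUnitaryGroup_iff.mp a₁.2
  obtain ⟨hu2, hd2⟩ := Matrix.mem_specialUnitaryGroup_iff.mp a₂.2
  obtain ⟨hu3, hd3⟩ := Matrix.mem_specialUnitaryGroup_iff.mp a₃.2
  have hp : (a₁ : M2) * (a₂ : M2) * (a₃ : M2) = 1 := by
    have := congrArg Subtype.val hprod
    push_cast at this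
    exact this
  have t1 := trace_of_spectrum _ hd1 C₁ h₁
  have t2 := trace_of_spectrum _ hd2 C₂ h₂
  have hdAB : ((a₁ : M2) * (a₂ : M2)).det = 1 := by
    rw [Matrix.det_mul, hd1, hd2, one_mul]
  have hC : ((a₁ : M2) * (a₂ : M2))⁻¹ = (a₃ : M2) := Matrix.inv_eq_right_inv hp
  have t3 : ((a₁ : M2) * (a₂ : M2)).trace = -2 * (Real.cos C₃ : ℂ) := by
    have h := trace_of_spectrum _ hd3 C₃ h₃
    rw [← hC, inv_eq_trace_smul _ hdAB, Matrix.trace_sub, Matrix.trace_smul,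
      Matrix.trace_one] at h
    simp only [smul_eq_mul, Fintype.card_fin, Nat.cast_ofNat] at h
    linear_combination h
  have hAu : IsUnit ((a₁ : M2)).det := by rw [hd1]; exact isUnit_one
  have hBu : IsUnit ((a₂ : M2)).det := by rw [hd2]; exact isUnit_one
  have hkey : ((a₁ : M2) * (a₂ : M2) * ((a₁ : M2))⁻¹ * ((a₂ : M2))⁻¹).trace
      = 4 * ((Real.cos C₁ : ℂ) ^ 2 + (Real.cos C₂ : ℂ) ^ 2 + (Real.cos C₃ : ℂ) ^ 2
          + 2 * (Real.cos C₁ : ℂ) * (Real.cos C₂ : ℂ) * (Real.cos C₃ : ℂ)) - 2 := by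
    rw [trace_commutator _ _ hd1 hd2, t1, t2, t3]
    ring
  constructor
  · intro h
    -- complex version of the equality
    have hcplx : ((Real.cos C₁ : ℂ) ^ 2 + (Real.cos C₂ : ℂ) ^ 2 + (Real.cos C₃ : ℂ) ^ 2
        + 2 * (Real.cos C₁ : ℂ) * (Real.cos C₂ : ℂ) * (Real.cos C₃ : ℂ)) = 1 := by
      exact_mod_cast congrArg (fun x : ℝ => (x : ℂ)) h
    have htr : ((a₁ : M2) * (a₂ : M2) * ((a₁ : M2))⁻¹ * ((a₂ : M2))⁻¹).trace = 2 := by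
      rw [hkey, hcplx]; ring
    have hinvA : ((a₁ : M2))⁻¹ = star (a₁ : M2) :=
      Matrix.inv_eq_right_inv ((Matrix.mem_unitaryGroup_iff).mp hu1)
    have hinvB : ((a₂ : M2))⁻¹ = star (a₂ : M2) :=
      Matrix.inv_eq_right_inv ((Matrix.mem_unitaryGroup_iff).mp hu2)
    have hgu : (a₁ : M2) * (a₂ : M2) * ((a₁ : M2))⁻¹ * ((a₂ : M2))⁻¹
        ∈ Matrix.unitaryGroup (Fin 2) ℂ := by
      rw [hinvA, hinvB]
      exact mul_mem (mul_mem (mul_mem hu1 hu2) (Unitary.star_mem hu1)) (Unitary.star_mem hu2)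
    have hgd : ((a₁ : M2) * (a₂ : M2) * ((a₁ : M2))⁻¹ * ((a₂ : M2))⁻¹).det = 1 := by
      rw [Matrix.det_mul, Matrix.det_mul, Matrix.det_mul, Matrix.det_nonsing_inv,
        Matrix.det_nonsing_inv, hd1, hd2]
      norm_num
    have hg1 : (a₁ : M2) * (a₂ : M2) * ((a₁ : M2))⁻¹ * ((a₂ : M2))⁻¹ = 1 :=
      su2_of_trace_two _ hgu hgd htr
    have hABA : (a₁ : M2) * (a₂ : M2) * ((a₁ : M2))⁻¹ = (a₂ : M2) := by
      calc (a₁ : M2) * (a₂ : M2) * ((a₁ : M2))⁻¹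
          = (a₁ : M2) * (a₂ : M2) * ((a₁ : M2))⁻¹ * (((a₂ : M2))⁻¹ * (a₂ : M2)) := by
            rw [Matrix.nonsing_inv_mul _ hBu, mul_one]
        _ = ((a₁ : M2) * (a₂ : M2) * ((a₁ : M2))⁻¹ * ((a₂ : M2))⁻¹) * (a₂ : M2) := by
            noncomm_ring
        _ = (a₂ : M2) := by rw [hg1, one_mul]
    have hcomm : (a₁ : M2) * (a₂ : M2) = (a₂ : M2) * (a₁ : M2) := by
      calc (a₁ : M2) * (a₂ : M2)
          = (a₁ : M2) * (a₂ : M2) * (((a₁ : M2))⁻¹ * (a₁ : M2)) := by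
            rw [Matrix.nonsing_inv_mul _ hAu, mul_one]
        _ = ((a₁ : M2) * (a₂ : M2) * ((a₁ : M2))⁻¹) * (a₁ : M2) := by noncomm_ring
        _ = (a₂ : M2) * (a₁ : M2) := by rw [hABA]
    obtain ⟨eA1, eA2, eA3⟩ := su2_entries _ hu1 hd1
    obtain ⟨eB1, eB2, eB3⟩ := su2_entries _ hu2 hd2
    obtain ⟨u, hdA, hdB⟩ := exists_simul_diag _ _ eA1 eA2 eA3 eB1 eB2 eB3 hcomm
    refine ⟨u, hdA, hdB, ?_⟩
    have hC3 : ((↑(u⁻¹) : M2) * ((a₁ : M2) * (a₂ : M2)) * ↑u)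
        * ((↑(u⁻¹) : M2) * (a₃ : M2) * ↑u) = 1 := by
      rw [conj_mul, hp, mul_one, Units.inv_mul]
    refine isDiag_of_mul_eq_one _ _ ?_ hC3
    rw [← conj_mul]
    exact isDiag_mul _ _ hdA hdB
  · rintro ⟨P, hdA, hdB, hdC⟩
    have hcomm' : ((↑(P⁻¹) : M2) * (a₁ : M2) * (↑P : M2)) * ((↑(P⁻¹) : M2) * (a₂ : M2) * (↑P : M2))
        = ((↑(P⁻¹) : M2) * (a₂ : M2) * (↑P : M2)) * ((↑(P⁻¹) : M2) * (a₁ : M2) * (↑P : M2)) :=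
      isDiag_comm _ _ hdA hdB
    rw [conj_mul, conj_mul] at hcomm'
    have hcomm : (a₁ : M2) * (a₂ : M2) = (a₂ : M2) * (a₁ : M2) := conj_inj P _ _ hcomm'
    have hg1 : (a₁ : M2) * (a₂ : M2) * ((a₁ : M2))⁻¹ * ((a₂ : M2))⁻¹ = 1 := by
      rw [hcomm, mul_assoc ((a₂ : M2)), Matrix.mul_nonsing_inv _ hAu, mul_one,
        Matrix.mul_nonsing_inv _ hBu]
    have htr : ((a₁ : M2) * (a₂ : M2) * ((a₁ : M2))⁻¹ * ((a₂ : M2))⁻¹).trace = 2 := by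
      rw [hg1, Matrix.trace_one]
      norm_num
    rw [hkey] at htr
    have hcplx : (((Real.cos C₁ ^ 2 + Real.cos C₂ ^ 2 + Real.cos C₃ ^ 2 +
        2 * Real.cos C₁ * Real.cos C₂ * Real.cos C₃ : ℝ)) : ℂ) = ((1 : ℝ) : ℂ) := by
      push_cast [-Complex.ofReal_cos]
      linear_combination (1/4 : ℂ) * htr
    exact_mod_cast hcplx
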